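/- Let A be a weight system. Define n_−^A to be the vector space with basis f^A_{i,j}, 1 ≤ i < j ≤ n, with bracket [f^A_{i,j}, f^A_{k,l}] = f^A_{i,l} if j = k, i ≤ k and a_{i,j}+a_{k,l} = a_{i,l}; = −f^A_{k,j} if l = i, k ≤ i and a_{k,l}+a_{i,j} = a_{k,j}; and 0 otherwise. Then this bracket satisfies the Jacobi identity and antisymmetry, so n_−^A is a Lie algebra; moreover n_−^A is nilpotent. -/

import Mathlib

/-- Structure constants of the degenerate bracket: `[f^A_{i,j}, f^A_{k,l}] = f^A_{i,l}`
if `j = k` and `a_{i,j} + a_{k,l} = a_{i,l}`; `= -f^A_{k,j}` if `l = i` and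
`a_{k,l} + a_{i,j} = a_{k,j}`; and `0` otherwise. -/
noncomputable def strC (n : ℕ) (a : ℕ → ℕ → ℤ) (p q : ℕ × ℕ) : (ℕ × ℕ) →₀ ℝ :=
  (if p.2 = q.1 ∧ a p.1 p.2 + a q.1 q.2 = a p.1 q.2 ∧
      (1 ≤ p.1 ∧ p.1 < p.2 ∧ p.2 ≤ n) ∧ (1 ≤ q.1 ∧ q.1 < q.2 ∧ q.2 ≤ n)
    then Finsupp.single (p.1, q.2) (1 : ℝ) else 0)
  - (if q.2 = p.1 ∧ a q.1 q.2 + a p.1 p.2 = a q.1 p.2 ∧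
      (1 ≤ p.1 ∧ p.1 < p.2 ∧ p.2 ≤ n) ∧ (1 ≤ q.1 ∧ q.1 < q.2 ∧ q.2 ≤ n)
    then Finsupp.single (q.1, p.2) (1 : ℝ) else 0)

/-- The bilinear extension of the degenerate bracket to the span of the `f^A_{i,j}`. -/
noncomputable def brkt (n : ℕ) (a : ℕ → ℕ → ℤ) (x y : (ℕ × ℕ) →₀ ℝ) : (ℕ × ℕ) →₀ ℝ :=
  x.sum fun p cp => y.sum fun q cq => (cp * cq) • strC n a p q

/-- `nest m v = [v_m, [v_{m-1}, […, [v_1, v_0]]]]`: a left-nested bracket of length `m+1`. -/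
noncomputable def nest (n : ℕ) (a : ℕ → ℕ → ℤ) : ℕ → (ℕ → ((ℕ × ℕ) →₀ ℝ)) → ((ℕ × ℕ) →₀ ℝ)
  | 0, v => v 0
  | m + 1, v => brkt n a (v (m + 1)) (nest n a m v)

section WS
variable (n : ℕ) (a : ℕ → ℕ → ℤ)

/-- Telescoped condition (b). -/
lemma wsL1 (hb : ∀ i j, 1 ≤ i → i + 1 < j → j + 1 ≤ n →
      a i j + a (i+1) (j+1) ≥ a i (j+1) + a (i+1) j) :
    ∀ i j k, 1 ≤ i → i + 1 < j → j ≤ k → k ≤ n →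
      a i j + a (i+1) k ≥ a i k + a (i+1) j := by
  intro i j k h1 h2 h3
  induction k, h3 using Nat.le_induction with
  | base => intro _; omega
  | succ k hk ih =>
    intro hkn
    have h5 := ih (by omega)
    have h6 := hb i k h1 (by omega) hkn
    omega

lemma wsC2 (ha : ∀ i, 1 ≤ i → i + 2 ≤ n → a i (i+1) + a (i+1) (i+2) ≥ a i (i+2))
    (hb : ∀ i j, 1 ≤ i → i + 1 < j → j + 1 ≤ n →
      a i j + a (i+1) (j+1) ≥ a i (j+1) + a (i+1) j) :
    ∀ i j, 1 ≤ i → i + 1 < j → j ≤ n → a i (i+1) + a (i+1) j ≥ a i j := by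
  intro i j h1 h2
  induction j, h2 using Nat.le_induction with
  | base =>
    intro h
    have h6 := ha i h1 (by omega)
    show a i (i+1) + a (i+1) (i+2) ≥ a i (i+2)
    omega
  | succ j hj ih =>
    intro hjn
    have h5 := ih (by omega)
    have h6 := hb i j h1 (by omega) hjn
    omega

/-- General triangle inequality (A). -/
lemma wsA (ha : ∀ i, 1 ≤ i → i + 2 ≤ n → a i (i+1) + a (i+1) (i+2) ≥ a i (i+2))
    (hb : ∀ i j, 1 ≤ i → i + 1 < j → j + 1 ≤ n →
      a i j + a (i+1) (j+1) ≥ a i (j+1) + a (i+1) j) :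
    ∀ i j k, 1 ≤ i → i < j → j < k → k ≤ n → a i j + a j k ≥ a i k := by
  have key : ∀ d i k, 1 ≤ i → i + 1 + d < k → k ≤ n →
      a i (i+1+d) + a (i+1+d) k ≥ a i k := by
    intro d
    induction d with
    | zero => intro i k h1 h2 h3; simpa using wsC2 n a ha hb i k h1 (by omega) h3
    | succ d ih =>
      intro i k h1 h2 h3
      have h4 := ih (i+1) k (by omega) (by omega) h3
      have h5 := wsL1 n a hb i (i+1+(d+1)) k h1 (by omega) (by omega) h3
      have e : i + 1 + 1 + d = i + 1 + (d+1) := by omega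
      rw [e] at h4
      omega
  intro i j k h1 h2 h3 h4
  have e : i + 1 + (j - i - 1) = j := by omega
  have := key (j - i - 1) i k h1 (by omega) h4
  rwa [e] at this
end WS


section BR
variable (n : ℕ) (a : ℕ → ℕ → ℤ)

lemma strC_antisymm (p q : ℕ × ℕ) : strC n a p q = - strC n a q p := by
  unfold strC
  rw [neg_sub]
  congr 1 <;> exact if_congr (by tauto) rfl rfl

lemma brkt_zero_left (y) : brkt n a 0 y = 0 := by simp [brkt]

lemma brkt_zero_right (x) : brkt n a x 0 = 0 := by simp [brkt]

lemma brkt_add_left (x x' y) : brkt n a (x + x') y = brkt n a x y + brkt n a x' y := by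
  unfold brkt
  rw [Finsupp.sum_add_index' (by intro p; simp) ?_]
  intro p b1 b2
  rw [← Finsupp.sum_add]
  congr 1; ext q cq
  rw [add_mul, add_smul]

lemma brkt_add_right (x y y') : brkt n a x (y + y') = brkt n a x y + brkt n a x y' := by
  unfold brkt
  rw [← Finsupp.sum_add]
  congr 1; ext p cp
  rw [Finsupp.sum_add_index' (by intro q; simp) ?_]
  intro q b1 b2
  rw [mul_add, add_smul]

lemma brkt_smul_left (c : ℝ) (x y) : brkt n a (c • x) y = c • brkt n a x y := by
  unfold brkt
  rw [Finsupp.sum_smul_index (by intro p; simp), Finsupp.smul_sum]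
  apply Finsupp.sum_congr
  intro p _
  rw [Finsupp.smul_sum]
  apply Finsupp.sum_congr
  intro q _
  rw [smul_smul, mul_assoc]

lemma brkt_smul_right (c : ℝ) (x y) : brkt n a x (c • y) = c • brkt n a x y := by
  unfold brkt
  rw [Finsupp.smul_sum]
  apply Finsupp.sum_congr
  intro p _
  rw [Finsupp.sum_smul_index (by intro q; simp), Finsupp.smul_sum]
  apply Finsupp.sum_congr
  intro q _
  rw [smul_smul, mul_left_comm]

lemma brkt_sub_right (x y z) : brkt n a x (y - z) = brkt n a x y - brkt n a x z := by
  unfold brkt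
  rw [← Finsupp.sum_sub]
  congr 1; ext p cp
  rw [Finsupp.sum_sub_index ?_]
  intro q b1 b2
  rw [mul_sub, sub_smul]

lemma brkt_antisymm (x y) : brkt n a x y = - brkt n a y x := by
  rw [eq_neg_iff_add_eq_zero]
  unfold brkt
  rw [Finsupp.sum_comm y x]
  rw [← Finsupp.sum_add]
  trans x.sum fun _ _ => (0 : (ℕ × ℕ) →₀ ℝ)
  · apply Finsupp.sum_congr
    intro p _
    rw [← Finsupp.sum_add]
    trans y.sum fun _ _ => (0 : (ℕ × ℕ) →₀ ℝ)
    · apply Finsupp.sum_congr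
      intro q _
      rw [strC_antisymm n a p q, smul_neg, mul_comm]
      exact neg_add_cancel _
    · exact Finsupp.sum_fun_zero _
  · exact Finsupp.sum_fun_zero _

lemma brkt_single_left (p : ℕ × ℕ) (c : ℝ) (y) :
    brkt n a (Finsupp.single p c) y = y.sum fun q cq => (c * cq) • strC n a p q := by
  unfold brkt
  apply Finsupp.sum_single_index
  simp

lemma brkt_single_single (p q : ℕ × ℕ) (c d : ℝ) :
    brkt n a (Finsupp.single p c) (Finsupp.single q d) = (c * d) • strC n a p q := by
  rw [brkt_single_left]
  apply Finsupp.sum_single_index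
  simp

lemma brkt_ite_right (C : Prop) [Decidable C] (x y) :
    brkt n a x (if C then y else 0) = if C then brkt n a x y else 0 := by
  split <;> simp [brkt_zero_right]

end BR


section JC
variable (n : ℕ) (a : ℕ → ℕ → ℤ)

def Adm (n : ℕ) (p : ℕ × ℕ) : Prop := 1 ≤ p.1 ∧ p.1 < p.2 ∧ p.2 ≤ n

def CondR (n : ℕ) (a : ℕ → ℕ → ℤ) (x y z : ℕ × ℕ) : Prop :=
  (y.2 = z.1 ∧ a y.1 y.2 + a z.1 z.2 = a y.1 z.2 ∧ Adm n y ∧ Adm n z) ∧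
  (x.2 = y.1 ∧ a x.1 x.2 + a y.1 z.2 = a x.1 z.2 ∧ Adm n x ∧ (1 ≤ y.1 ∧ y.1 < z.2 ∧ z.2 ≤ n))

def CondR' (n : ℕ) (a : ℕ → ℕ → ℤ) (x y z : ℕ × ℕ) : Prop :=
  (y.2 = z.1 ∧ a y.1 y.2 + a z.1 z.2 = a y.1 z.2 ∧ Adm n z ∧ Adm n y) ∧
  (x.2 = y.1 ∧ a x.1 x.2 + a y.1 z.2 = a x.1 z.2 ∧ Adm n x ∧ (1 ≤ y.1 ∧ y.1 < z.2 ∧ z.2 ≤ n))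

def CondL (n : ℕ) (a : ℕ → ℕ → ℤ) (x y z : ℕ × ℕ) : Prop :=
  (x.2 = y.1 ∧ a x.1 x.2 + a y.1 y.2 = a x.1 y.2 ∧ Adm n x ∧ Adm n y) ∧
  (y.2 = z.1 ∧ a x.1 y.2 + a z.1 z.2 = a x.1 z.2 ∧ Adm n z ∧ (1 ≤ x.1 ∧ x.1 < y.2 ∧ y.2 ≤ n))

def CondL' (n : ℕ) (a : ℕ → ℕ → ℤ) (x y z : ℕ × ℕ) : Prop :=
  (x.2 = y.1 ∧ a x.1 x.2 + a y.1 y.2 = a x.1 y.2 ∧ Adm n y ∧ Adm n x) ∧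
  (y.2 = z.1 ∧ a x.1 y.2 + a z.1 z.2 = a x.1 z.2 ∧ Adm n z ∧ (1 ≤ x.1 ∧ x.1 < y.2 ∧ y.2 ≤ n))

instance (n : ℕ) (a : ℕ → ℕ → ℤ) (x y z : ℕ × ℕ) : Decidable (CondR n a x y z) := by
  unfold CondR Adm; infer_instance
instance (n : ℕ) (a : ℕ → ℕ → ℤ) (x y z : ℕ × ℕ) : Decidable (CondR' n a x y z) := by
  unfold CondR' Adm; infer_instance
instance (n : ℕ) (a : ℕ → ℕ → ℤ) (x y z : ℕ × ℕ) : Decidable (CondL n a x y z) := by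
  unfold CondL Adm; infer_instance
instance (n : ℕ) (a : ℕ → ℕ → ℤ) (x y z : ℕ × ℕ) : Decidable (CondL' n a x y z) := by
  unfold CondL' Adm; infer_instance

lemma condR'_iff (x y z : ℕ × ℕ) : CondR' n a x y z ↔ CondR n a x y z := by
  unfold CondR CondR'; tauto

lemma condL'_iff (x y z : ℕ × ℕ) : CondL' n a x y z ↔ CondL n a x y z := by
  unfold CondL CondL'; tauto

lemma condL_iff (hA : ∀ i j k, 1 ≤ i → i < j → j < k → k ≤ n → a i j + a j k ≥ a i k)
    (x y z : ℕ × ℕ) : CondL n a x y z ↔ CondR n a x y z := by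
  obtain ⟨i, j⟩ := x; obtain ⟨j', k⟩ := y; obtain ⟨k', l⟩ := z
  unfold CondL CondR Adm
  dsimp only
  constructor
  · rintro ⟨⟨h1, e1, hx, hy⟩, h2, e2, hz, hc⟩
    subst h1; subst h2
    have A1 := hA i j k hx.1 hx.2.1 hy.2.1 hy.2.2
    have A2 := hA i k l hx.1 (by omega) hz.2.1 hz.2.2
    have A3 := hA j k l (by omega) hy.2.1 hz.2.1 hz.2.2
    have A4 := hA i j l hx.1 hx.2.1 (by omega) hz.2.2
    refine ⟨⟨rfl, by omega, hy, hz⟩, rfl, by omega, hx, ?_⟩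
    omega
  · rintro ⟨⟨h1, e1, hy, hz⟩, h2, e2, hx, hc⟩
    subst h1; subst h2
    have A1 := hA i j k hx.1 hx.2.1 hy.2.1 hy.2.2
    have A2 := hA i k l hx.1 (by omega) hz.2.1 hz.2.2
    have A3 := hA j k l (by omega) hy.2.1 hz.2.1 hz.2.2
    have A4 := hA i j l hx.1 hx.2.1 (by omega) hz.2.2
    refine ⟨⟨rfl, by omega, hx, hy⟩, rfl, by omega, hz, ?_⟩
    omega
end JC


lemma ite_sub_zero {α : Type*} [SubtractionMonoid α] (C : Prop) [Decidable C] (u v : α) :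
    (if C then u - v else 0) = (if C then u else 0) - (if C then v else 0) := by
  split <;> simp

lemma ite_ite_and {α : Type*} [Zero α] (C D : Prop) [Decidable C] [Decidable D] (u : α) :
    (if C then (if D then u else 0) else 0) = if C ∧ D then u else 0 := by
  split_ifs <;> tauto

section TX
variable (n : ℕ) (a : ℕ → ℕ → ℤ)

lemma brkt_single_one (q r : ℕ × ℕ) :
    brkt n a (Finsupp.single q (1:ℝ)) (Finsupp.single r (1:ℝ)) = strC n a q r := by
  rw [brkt_single_single]; simp

lemma Texpand (p q r : ℕ × ℕ) :
    brkt n a (Finsupp.single p (1:ℝ)) (strC n a q r) =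
      ((if CondR n a p q r then Finsupp.single (p.1, r.2) (1:ℝ) else 0)
        - (if CondL n a q r p then Finsupp.single (q.1, p.2) (1:ℝ) else 0))
      - ((if CondR' n a p r q then Finsupp.single (p.1, q.2) (1:ℝ) else 0)
        - (if CondL' n a r q p then Finsupp.single (r.1, p.2) (1:ℝ) else 0)) := by
  conv_lhs => rw [strC]
  rw [brkt_sub_right, brkt_ite_right, brkt_ite_right, brkt_single_single, brkt_single_single]
  simp only [one_mul, one_smul, CondR, CondR', CondL, CondL', Adm]
  conv_lhs => rw [strC, strC]
  rw [ite_sub_zero, ite_sub_zero]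
  rw [ite_ite_and, ite_ite_and, ite_ite_and, ite_ite_and]

end TX



section JAC
variable (n : ℕ) (a : ℕ → ℕ → ℤ)

lemma jac_single (hA : ∀ i j k, 1 ≤ i → i < j → j < k → k ≤ n → a i j + a j k ≥ a i k)
    (p q r : ℕ × ℕ) :
    brkt n a (Finsupp.single p (1:ℝ)) (brkt n a (Finsupp.single q 1) (Finsupp.single r 1))
      + brkt n a (Finsupp.single q 1) (brkt n a (Finsupp.single r 1) (Finsupp.single p 1))
      + brkt n a (Finsupp.single r 1) (brkt n a (Finsupp.single p 1) (Finsupp.single q 1)) = 0 := by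
  rw [brkt_single_one, brkt_single_one, brkt_single_one]
  rw [Texpand n a p q r, Texpand n a q r p, Texpand n a r p q]
  have eL : ∀ x y z, CondL n a x y z ↔ CondR n a x y z := condL_iff n a hA
  have eL' : ∀ x y z, CondL' n a x y z ↔ CondR n a x y z :=
    fun x y z => (condL'_iff n a x y z).trans (eL x y z)
  have eR' : ∀ x y z, CondR' n a x y z ↔ CondR n a x y z := condR'_iff n a
  simp only [eL, eL', eR']
  abel



lemma jac_all (hA : ∀ i j k, 1 ≤ i → i < j → j < k → k ≤ n → a i j + a j k ≥ a i k)
    (x y z : (ℕ × ℕ) →₀ ℝ) :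
    brkt n a x (brkt n a y z) + brkt n a y (brkt n a z x) + brkt n a z (brkt n a x y) = 0 := by
  have Hs : ∀ (p : ℕ × ℕ) (b : ℝ) (q : ℕ × ℕ) (c : ℝ) (r : ℕ × ℕ) (d : ℝ),
      brkt n a (Finsupp.single p b) (brkt n a (Finsupp.single q c) (Finsupp.single r d))
      + brkt n a (Finsupp.single q c) (brkt n a (Finsupp.single r d) (Finsupp.single p b))
      + brkt n a (Finsupp.single r d) (brkt n a (Finsupp.single p b) (Finsupp.single q c)) = 0 := by
    intro p b q c r d
    have hp : Finsupp.single p b = b • Finsupp.single p (1:ℝ) := by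
      rw [Finsupp.smul_single', mul_one]
    have hq : Finsupp.single q c = c • Finsupp.single q (1:ℝ) := by
      rw [Finsupp.smul_single', mul_one]
    have hr : Finsupp.single r d = d • Finsupp.single r (1:ℝ) := by
      rw [Finsupp.smul_single', mul_one]
    rw [hp, hq, hr]
    simp only [brkt_smul_left, brkt_smul_right, smul_smul]
    rw [show b * d * c = d * c * b by ring, show c * b * d = d * c * b by ring]
    rw [← smul_add, ← smul_add, jac_single n a hA p q r, smul_zero]
  have H3 : ∀ (p : ℕ × ℕ) (b : ℝ) (q : ℕ × ℕ) (c : ℝ) (z : (ℕ × ℕ) →₀ ℝ),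
      brkt n a (Finsupp.single p b) (brkt n a (Finsupp.single q c) z)
      + brkt n a (Finsupp.single q c) (brkt n a z (Finsupp.single p b))
      + brkt n a z (brkt n a (Finsupp.single p b) (Finsupp.single q c)) = 0 := by
    intro p b q c z
    induction z using Finsupp.induction with
    | zero => simp [brkt_zero_left, brkt_zero_right]
    | single_add r d f hrf hd ih =>
      have expand : ∀ u v w₁ w₂ : (ℕ × ℕ) →₀ ℝ,
          brkt n a u (brkt n a v (w₁ + w₂)) + brkt n a v (brkt n a (w₁ + w₂) u)
          + brkt n a (w₁ + w₂) (brkt n a u v)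
          = (brkt n a u (brkt n a v w₁) + brkt n a v (brkt n a w₁ u) + brkt n a w₁ (brkt n a u v))
          + (brkt n a u (brkt n a v w₂) + brkt n a v (brkt n a w₂ u) + brkt n a w₂ (brkt n a u v)) := by
        intro u v w₁ w₂
        simp only [brkt_add_left, brkt_add_right]
        abel
      rw [expand, Hs, ih, add_zero]
  have H2 : ∀ (p : ℕ × ℕ) (b : ℝ) (y z : (ℕ × ℕ) →₀ ℝ),
      brkt n a (Finsupp.single p b) (brkt n a y z)
      + brkt n a y (brkt n a z (Finsupp.single p b))
      + brkt n a z (brkt n a (Finsupp.single p b) y) = 0 := by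
    intro p b y z
    induction y using Finsupp.induction generalizing z with
    | zero => simp [brkt_zero_left, brkt_zero_right]
    | single_add q c f hqf hc ih =>
      have expand : ∀ u w₁ w₂ v : (ℕ × ℕ) →₀ ℝ,
          brkt n a u (brkt n a (w₁ + w₂) v) + brkt n a (w₁ + w₂) (brkt n a v u)
          + brkt n a v (brkt n a u (w₁ + w₂))
          = (brkt n a u (brkt n a w₁ v) + brkt n a w₁ (brkt n a v u) + brkt n a v (brkt n a u w₁))
          + (brkt n a u (brkt n a w₂ v) + brkt n a w₂ (brkt n a v u) + brkt n a v (brkt n a u w₂)) := by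
        intro u w₁ w₂ v
        simp only [brkt_add_left, brkt_add_right]
        abel
      rw [expand, H3, ih, add_zero]
  induction x using Finsupp.induction generalizing y z with
  | zero => simp [brkt_zero_left, brkt_zero_right]
  | single_add p b f hpf hb ih =>
    have expand : ∀ w₁ w₂ u v : (ℕ × ℕ) →₀ ℝ,
        brkt n a (w₁ + w₂) (brkt n a u v) + brkt n a u (brkt n a v (w₁ + w₂))
        + brkt n a v (brkt n a (w₁ + w₂) u)
        = (brkt n a w₁ (brkt n a u v) + brkt n a u (brkt n a v w₁) + brkt n a v (brkt n a w₁ u))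
        + (brkt n a w₂ (brkt n a u v) + brkt n a u (brkt n a v w₂) + brkt n a v (brkt n a w₂ u)) := by
      intro w₁ w₂ u v
      simp only [brkt_add_left, brkt_add_right]
      abel
    rw [expand, H2, ih, add_zero]

end JAC


section NIL
variable (n : ℕ) (a : ℕ → ℕ → ℤ)

lemma strC_apply_zero (d : ℕ) (p q s : ℕ × ℕ)
    (hq : (1 ≤ q.1 ∧ q.1 < q.2 ∧ q.2 ≤ n) → d ≤ q.2 - q.1)
    (hbad : ¬ ((1 ≤ s.1 ∧ s.1 < s.2 ∧ s.2 ≤ n) ∧ d + 1 ≤ s.2 - s.1)) :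
    strC n a p q s = 0 := by
  unfold strC
  rw [Finsupp.sub_apply]
  split_ifs with h1 h2 h2
  · obtain ⟨e1, _, ⟨hp1, hp2, hp3⟩, hq1, hq2, hq3⟩ := h1
    obtain ⟨e2, _⟩ := h2
    omega
  · obtain ⟨e1, _, ⟨hp1, hp2, hp3⟩, hq1, hq2, hq3⟩ := h1
    have hd := hq ⟨hq1, hq2, hq3⟩
    rw [Finsupp.zero_apply, sub_zero, Finsupp.single_apply, if_neg]
    intro heq
    apply hbad
    rw [← heq]
    exact ⟨⟨hp1, by omega, hq3⟩, by omega⟩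
  · obtain ⟨e1, _, ⟨hp1, hp2, hp3⟩, hq1, hq2, hq3⟩ := h2
    have hd := hq ⟨hq1, hq2, hq3⟩
    rw [Finsupp.zero_apply, zero_sub, Finsupp.single_apply, neg_eq_zero, if_neg]
    intro heq
    apply hbad
    rw [← heq]
    exact ⟨⟨hq1, by omega, hp3⟩, by omega⟩
  · simp

lemma brkt_supp (d : ℕ) (x y : (ℕ × ℕ) →₀ ℝ)
    (hy : ∀ q ∈ y.support, (1 ≤ q.1 ∧ q.1 < q.2 ∧ q.2 ≤ n) → d ≤ q.2 - q.1) :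
    ∀ s ∈ (brkt n a x y).support, (1 ≤ s.1 ∧ s.1 < s.2 ∧ s.2 ≤ n) ∧ d + 1 ≤ s.2 - s.1 := by
  intro s hs
  by_contra hbad
  rw [Finsupp.mem_support_iff] at hs
  apply hs
  unfold brkt
  rw [Finsupp.sum_apply]
  apply Finset.sum_eq_zero
  intro p hp
  dsimp only
  rw [Finsupp.sum_apply]
  apply Finset.sum_eq_zero
  intro q hq
  dsimp only
  rw [Finsupp.smul_apply, strC_apply_zero n a d p q s (hy q hq) hbad, smul_zero]

lemma nest_supp : ∀ m, 1 ≤ m → ∀ v, ∀ s ∈ (nest n a m v).support,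
    (1 ≤ s.1 ∧ s.1 < s.2 ∧ s.2 ≤ n) ∧ m + 1 ≤ s.2 - s.1 := by
  intro m hm
  induction m, hm using Nat.le_induction with
  | base =>
    intro v
    show ∀ s ∈ (brkt n a (v 1) (nest n a 0 v)).support, _
    exact brkt_supp n a 1 (v 1) (nest n a 0 v) (by intro q _ hq; omega)
  | succ m hm ih =>
    intro v
    show ∀ s ∈ (brkt n a (v (m + 1)) (nest n a m v)).support, _
    exact brkt_supp n a (m + 1) (v (m + 1)) (nest n a m v)
      (fun q hq hq2 => ((ih v) q hq).2)

end NIL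

/-- For any weight system, the degenerate bracket is antisymmetric and satisfies the
Jacobi identity, so `n_-^A` is a Lie algebra; moreover `n_-^A` is nilpotent. -/
theorem stmt16 (n : ℕ) (hn : 2 ≤ n) (a : ℕ → ℕ → ℤ)
    (ha : ∀ i, 1 ≤ i → i + 2 ≤ n → a i (i+1) + a (i+1) (i+2) ≥ a i (i+2))
    (hb : ∀ i j, 1 ≤ i → i + 1 < j → j + 1 ≤ n →
      a i j + a (i+1) (j+1) ≥ a i (j+1) + a (i+1) j) :
    (∀ x y, brkt n a x y = - brkt n a y x) ∧
    (∀ x y z, brkt n a x (brkt n a y z) + brkt n a y (brkt n a z x)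
        + brkt n a z (brkt n a x y) = 0) ∧
    (∃ N : ℕ, ∀ m, N ≤ m → ∀ v : ℕ → ((ℕ × ℕ) →₀ ℝ), nest n a m v = 0) := by
  have hA := wsA n a ha hb
  refine ⟨fun x y => brkt_antisymm n a x y, fun x y z => jac_all n a hA x y z, ⟨n, ?_⟩⟩
  intro m hm v
  have hsupp := nest_supp n a m (by omega) v
  apply Finsupp.support_eq_empty.mp
  rw [Finset.eq_empty_iff_forall_notMem]
  intro s hs
  have := hsupp s hs
  omega
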